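/- For every integer p ≥ 2, the polynomial f = x^p·y + x·y^p ∈ ℂ[x,y] has Milnor number p²; that is, the quotient ring ℂ[x,y]/⟨∂f/∂x, ∂f/∂y⟩ is a ℂ-vector space of dimension exactly p². -/

import Mathlib

open MvPolynomial

namespace MilnorAux
noncomputable section

set_option linter.unreachableTactic false
set_option linter.unusedTactic false

abbrev R2 : Type := MvPolynomial (Fin 2) ℂ

def pC (q : ℕ) : ℂ := (q : ℂ) + 2

lemma pC_ne (q : ℕ) : pC q ≠ 0 := by
  have : pC q = ((q + 2 : ℕ) : ℂ) := by push_cast [pC]; ring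
  rw [this, Ne, Nat.cast_eq_zero]; omega

lemma one_sub_sq_ne (q : ℕ) : 1 - pC q ^ 2 ≠ 0 := by
  have h : pC q ^ 2 = (((q + 2) ^ 2 : ℕ) : ℂ) := by push_cast [pC]; ring
  intro hc
  have : (((q + 2) ^ 2 : ℕ) : ℂ) = ((1 : ℕ) : ℂ) := by rw [← h]; push_cast; linear_combination -hc
  have h2 : (q + 2) ^ 2 = 1 := Nat.cast_injective this
  have : (q+2)^2 = q*q+4*q+4 := by ring
  omega

def g1 (q : ℕ) : R2 := C (pC q) * (X 0 ^ (q+1) * X 1) + X 1 ^ (q+2)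

def g2 (q : ℕ) : R2 := X 0 ^ (q+2) + C (pC q) * (X 0 * X 1 ^ (q+1))

def Jd (q : ℕ) : Ideal R2 := Ideal.span {g1 q, g2 q}

lemma g1_mem (q : ℕ) : g1 q ∈ Jd q := Ideal.subset_span (by simp)

lemma g2_mem (q : ℕ) : g2 q ∈ Jd q := Ideal.subset_span (by simp)

lemma cancelC {J : Ideal R2} {h : R2} (a : ℂ) (ha : a ≠ 0) (hm : C a * h ∈ J) : h ∈ J := by
  have : h = C a⁻¹ * (C a * h) := by
    rw [← mul_assoc, ← C_mul, inv_mul_cancel₀ ha, C_1, one_mul]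
  rw [this]; exact Ideal.mul_mem_left _ _ hm

lemma mem_xy (q : ℕ) : X 0 * X 1 ^ (q+2) ∈ Jd q := by
  apply cancelC (1 - pC q ^ 2) (one_sub_sq_ne q)
  have hid : C (1 - pC q ^ 2) * (X 0 * X 1 ^ (q+2))
      = X 0 * g1 q - (C (pC q) * X 1) * g2 q := by
    simp only [g1, g2, map_sub, map_one, map_pow]; ring
  rw [hid]
  exact Ideal.sub_mem _ (Ideal.mul_mem_left _ _ (g1_mem q)) (Ideal.mul_mem_left _ _ (g2_mem q))

lemma mem_yx (q : ℕ) : X 0 ^ (q+2) * X 1 ∈ Jd q := by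
  apply cancelC (1 - pC q ^ 2) (one_sub_sq_ne q)
  have hid : C (1 - pC q ^ 2) * (X 0 ^ (q+2) * X 1)
      = X 1 * g2 q - (C (pC q) * X 0) * g1 q := by
    simp only [g1, g2, map_sub, map_one, map_pow]; ring
  rw [hid]
  exact Ideal.sub_mem _ (Ideal.mul_mem_left _ _ (g2_mem q)) (Ideal.mul_mem_left _ _ (g1_mem q))

lemma mem_ypow (q : ℕ) : X 1 ^ (2*q+3) ∈ Jd q := by
  have hid : (X 1 ^ (2*q+3) : R2)
      = X 1 ^ (q+1) * g1 q - (C (pC q) * X 0 ^ q) * (X 0 * X 1 ^ (q+2)) := by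
    simp only [g1]; ring
  rw [hid]
  exact Ideal.sub_mem _ (Ideal.mul_mem_left _ _ (g1_mem q)) (Ideal.mul_mem_left _ _ (mem_xy q))

lemma mem_xpow (q : ℕ) : X 0 ^ (2*q+3) ∈ Jd q := by
  have hid : (X 0 ^ (2*q+3) : R2)
      = X 0 ^ (q+1) * g2 q - (C (pC q) * X 1 ^ q) * (X 0 ^ (q+2) * X 1) := by
    simp only [g2]; ring
  rw [hid]
  exact Ideal.sub_mem _ (Ideal.mul_mem_left _ _ (g2_mem q)) (Ideal.mul_mem_left _ _ (mem_yx q))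

def nf (q i j : ℕ) : R2 :=
  if q + 2 ≤ j then
    (if i = 0 ∧ j ≤ 2*q+2 then X 1 ^ j else 0)
  else if j = 0 then
    (if i ≤ q+1 then X 0 ^ i
     else if i ≤ 2*q+1 then C (-(pC q)) * (X 0 ^ (i-(q+1)) * X 1 ^ (q+1))
     else if i = 2*q+2 then X 1 ^ (2*q+2) else 0)
  else
    (if i ≤ q then X 0 ^ i * X 1 ^ j
     else if i = q+1 then C (-(pC q)⁻¹) * X 1 ^ (q+1+j)
     else 0)

lemma nf_std_x (q i : ℕ) (h : i ≤ q+1) : nf q i 0 = X 0 ^ i := by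
  simp only [nf]; split_ifs <;> first | rfl | omega | (simp only [true_and] at *; try omega)

lemma nf_std_xy (q i j : ℕ) (hi : i ≤ q) (hj1 : 1 ≤ j) (hj2 : j ≤ q+1) :
    nf q i j = X 0 ^ i * X 1 ^ j := by
  simp only [nf]; split_ifs <;> first | rfl | omega | (simp only [true_and] at *; try omega)

lemma nf_std_y (q j : ℕ) (hj1 : q+2 ≤ j) (hj2 : j ≤ 2*q+2) : nf q 0 j = X 1 ^ j := by
  simp only [nf]; split_ifs <;> first | rfl | omega | (simp only [true_and] at *; try omega)

lemma nf_top_y (q i j : ℕ) (hi : 1 ≤ i) (hj : q+2 ≤ j) : nf q i j = 0 := by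
  simp only [nf]; split_ifs <;> first | rfl | omega | (simp only [true_and] at *; try omega)

lemma nf_y_big (q j : ℕ) (hj : 2*q+3 ≤ j) : nf q 0 j = 0 := by
  simp only [nf]; split_ifs <;> first | rfl | omega | (simp only [true_and] at *; try omega)

lemma nf_r2 (q j : ℕ) (hj1 : 1 ≤ j) (hj2 : j ≤ q+1) :
    nf q (q+1) j = C (-(pC q)⁻¹) * X 1 ^ (q+1+j) := by
  simp only [nf]; split_ifs <;> first | rfl | omega | (simp only [true_and] at *; try omega)

lemma nf_r4 (q i j : ℕ) (hi : q+2 ≤ i) (hj1 : 1 ≤ j) (hj2 : j ≤ q+1) : nf q i j = 0 := by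
  simp only [nf]; split_ifs <;> first | rfl | omega | (simp only [true_and] at *; try omega)

lemma nf_r8 (q i : ℕ) (h1 : q+2 ≤ i) (h2 : i ≤ 2*q+1) :
    nf q i 0 = C (-(pC q)) * (X 0 ^ (i-(q+1)) * X 1 ^ (q+1)) := by
  simp only [nf]; split_ifs <;> first | rfl | omega | (simp only [true_and] at *; try omega)

lemma nf_r6 (q : ℕ) : nf q (2*q+2) 0 = X 1 ^ (2*q+2) := by
  simp only [nf]; split_ifs <;> first | rfl | omega | (simp only [true_and] at *; try omega)

lemma nf_r7 (q i : ℕ) (h : 2*q+3 ≤ i) : nf q i 0 = 0 := by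
  simp only [nf]; split_ifs <;> first | rfl | omega | (simp only [true_and] at *; try omega)

lemma sub_nf_mem (q i j : ℕ) : X 0 ^ i * X 1 ^ j - nf q i j ∈ Jd q := by
  by_cases hj2 : q + 2 ≤ j
  · by_cases hi : i = 0
    · subst hi
      by_cases hj3 : j ≤ 2*q+2
      · rw [nf_std_y q j hj2 hj3]; simp
      · rw [nf_y_big q j (by omega), sub_zero]
        obtain ⟨k, rfl⟩ : ∃ k, j = 2*q+3+k := ⟨j - (2*q+3), by omega⟩
        have : (X 0 ^ 0 * X 1 ^ (2*q+3+k) : R2) = X 1 ^ k * X 1 ^ (2*q+3) := by ring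
        rw [this]; exact Ideal.mul_mem_left _ _ (mem_ypow q)
    · rw [nf_top_y q i j (by omega) hj2, sub_zero]
      obtain ⟨a, rfl⟩ : ∃ a, i = a + 1 := ⟨i - 1, by omega⟩
      obtain ⟨b, rfl⟩ : ∃ b, j = q+2+b := ⟨j - (q+2), by omega⟩
      have : (X 0 ^ (a+1) * X 1 ^ (q+2+b) : R2) = (X 0 ^ a * X 1 ^ b) * (X 0 * X 1 ^ (q+2)) := by
        ring
      rw [this]; exact Ideal.mul_mem_left _ _ (mem_xy q)
  · by_cases hj0 : j = 0
    · subst hj0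
      by_cases h1 : i ≤ q+1
      · rw [nf_std_x q i h1]; simp
      · by_cases h2 : i ≤ 2*q+1
        · rw [nf_r8 q i (by omega) h2]
          obtain ⟨k, rfl⟩ : ∃ k, i = q+2+k := ⟨i - (q+2), by omega⟩
          have hsub : q+2+k - (q+1) = k+1 := by omega
          rw [hsub]
          have hid : (X 0 ^ (q+2+k) * X 1 ^ 0 - C (-(pC q)) * (X 0 ^ (k+1) * X 1 ^ (q+1)) : R2)
              = X 0 ^ k * g2 q := by
            simp only [g2, map_neg]; ring
          rw [hid]; exact Ideal.mul_mem_left _ _ (g2_mem q)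
        · by_cases h3 : i = 2*q+2
          · subst h3
            rw [nf_r6 q]
            have hid : (X 0 ^ (2*q+2) * X 1 ^ 0 - X 1 ^ (2*q+2) : R2)
                = X 0 ^ q * g2 q - X 1 ^ q * g1 q := by
              simp only [g1, g2]; ring
            rw [hid]
            exact Ideal.sub_mem _ (Ideal.mul_mem_left _ _ (g2_mem q))
              (Ideal.mul_mem_left _ _ (g1_mem q))
          · rw [nf_r7 q i (by omega), sub_zero]
            obtain ⟨k, rfl⟩ : ∃ k, i = 2*q+3+k := ⟨i - (2*q+3), by omega⟩
            have : (X 0 ^ (2*q+3+k) * X 1 ^ 0 : R2) = X 0 ^ k * X 0 ^ (2*q+3) := by ring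
            rw [this]; exact Ideal.mul_mem_left _ _ (mem_xpow q)
    · -- 1 ≤ j ≤ q+1
      by_cases h1 : i ≤ q
      · rw [nf_std_xy q i j h1 (by omega) (by omega)]; simp
      · by_cases h2 : i = q+1
        · subst h2
          rw [nf_r2 q j (by omega) (by omega)]
          obtain ⟨b, rfl⟩ : ∃ b, j = b+1 := ⟨j - 1, by omega⟩
          have hC : (C ((pC q)⁻¹) * C (pC q) : R2) = 1 := by
            rw [← C_mul, inv_mul_cancel₀ (pC_ne q), C_1]
          have hid : (X 0 ^ (q+1) * X 1 ^ (b+1) - C (-(pC q)⁻¹) * X 1 ^ (q+1+(b+1)) : R2)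
              = (C ((pC q)⁻¹) * X 1 ^ b) * g1 q := by
            simp only [g1, map_neg]
            linear_combination (-(X 0 ^ (q+1) * X 1 ^ (b+1)) : R2) * hC
          rw [hid]; exact Ideal.mul_mem_left _ _ (g1_mem q)
        · rw [nf_r4 q i j (by omega) (by omega) (by omega), sub_zero]
          obtain ⟨a, rfl⟩ : ∃ a, i = q+2+a := ⟨i - (q+2), by omega⟩
          obtain ⟨b, rfl⟩ : ∃ b, j = b+1 := ⟨j - 1, by omega⟩
          have : (X 0 ^ (q+2+a) * X 1 ^ (b+1) : R2)
              = (X 0 ^ a * X 1 ^ b) * (X 0 ^ (q+2) * X 1) := by ring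
          rw [this]; exact Ideal.mul_mem_left _ _ (mem_yx q)

def e (i j : ℕ) : Fin 2 →₀ ℕ := Finsupp.single 0 i + Finsupp.single 1 j

lemma e_apply0 (i j : ℕ) : e i j 0 = i := by simp [e]

lemma e_apply1 (i j : ℕ) : e i j 1 = j := by simp [e]

lemma eq_e (m : Fin 2 →₀ ℕ) : m = e (m 0) (m 1) := by
  ext a; fin_cases a <;> simp [e]

lemma mono_e (i j : ℕ) : (monomial (e i j) (1:ℂ)) = X 0 ^ i * X 1 ^ j := by
  rw [X_pow_eq_monomial, X_pow_eq_monomial, monomial_mul, e, mul_one]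

lemma mono_eq (m : Fin 2 →₀ ℕ) : (monomial m (1:ℂ)) = X 0 ^ (m 0) * X 1 ^ (m 1) := by
  conv_lhs => rw [eq_e m]
  exact mono_e _ _

def NF (q : ℕ) : R2 →ₗ[ℂ] R2 :=
  (basisMonomials (Fin 2) ℂ).constr ℂ fun m => nf q (m 0) (m 1)

lemma NF_mono (q : ℕ) (m : Fin 2 →₀ ℕ) : NF q (monomial m 1) = nf q (m 0) (m 1) := by
  have : (monomial m (1:ℂ)) = basisMonomials (Fin 2) ℂ m := by
    rw [coe_basisMonomials]
  rw [this, NF, Module.Basis.constr_basis]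

lemma NF_X (q i j : ℕ) : NF q (X 0 ^ i * X 1 ^ j) = nf q i j := by
  rw [← mono_e, NF_mono, e_apply0, e_apply1]

lemma NF_monomial (q : ℕ) (m : Fin 2 →₀ ℕ) (a : ℂ) :
    NF q (monomial m a) = a • nf q (m 0) (m 1) := by
  have : (monomial m a) = a • (monomial m (1:ℂ)) := by
    rw [smul_monomial, smul_eq_mul, mul_one]
  rw [this, map_smul, NF_mono]

lemma id_sub_NF_mem (q : ℕ) (h : R2) : h - NF q h ∈ Jd q := by
  induction h using MvPolynomial.induction_on' with
  | monomial m a =>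
    rw [NF_monomial]
    have : (monomial m a) - a • nf q (m 0) (m 1)
        = a • (X 0 ^ (m 0) * X 1 ^ (m 1) - nf q (m 0) (m 1)) := by
      rw [smul_sub, ← mono_eq, smul_monomial, smul_eq_mul, mul_one]
    rw [this, smul_eq_C_mul]
    exact Ideal.mul_mem_left _ _ (sub_nf_mem q (m 0) (m 1))
  | add f g hf hg =>
    have : f + g - NF q (f + g) = (f - NF q f) + (g - NF q g) := by
      rw [map_add]; ring
    rw [this]; exact Ideal.add_mem _ hf hg

lemma NF_X_g1 (q a b : ℕ) : NF q (X 0 ^ a * X 1 ^ b * g1 q) = 0 := by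
  have hexp : X 0 ^ a * X 1 ^ b * g1 q
      = pC q • (X 0 ^ (a+q+1) * X 1 ^ (b+1)) + X 0 ^ a * X 1 ^ (b+q+2) := by
    rw [smul_eq_C_mul]; simp only [g1]; ring
  rw [hexp, map_add, map_smul, NF_X, NF_X]
  rcases Nat.eq_zero_or_pos a with ha | ha
  · subst ha
    by_cases hb : b ≤ q
    · rw [show (0:ℕ)+q+1 = q+1 by ring, nf_r2 q (b+1) (by omega) (by omega),
        nf_std_y q (b+q+2) (by omega) (by omega)]
      rw [smul_eq_C_mul, ← mul_assoc, ← C_mul]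
      have : pC q * -(pC q)⁻¹ = -1 := by
        rw [mul_neg, mul_inv_cancel₀ (pC_ne q)]
      rw [this, show q+1+(b+1) = b+q+2 by ring]
      simp
    · rw [show (0:ℕ)+q+1 = q+1 by ring, nf_top_y q (q+1) (b+1) (by omega) (by omega),
        nf_y_big q (b+q+2) (by omega)]
      simp
  · have h1 : nf q (a+q+1) (b+1) = 0 := by
      by_cases hb : b+1 ≤ q+1
      · exact nf_r4 q _ _ (by omega) (by omega) hb
      · exact nf_top_y q _ _ (by omega) (by omega)
    have h2 : nf q a (b+q+2) = 0 := nf_top_y q _ _ (by omega) (by omega)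
    rw [h1, h2]; simp

lemma NF_X_g2 (q a b : ℕ) : NF q (X 0 ^ a * X 1 ^ b * g2 q) = 0 := by
  have hexp : X 0 ^ a * X 1 ^ b * g2 q
      = X 0 ^ (a+q+2) * X 1 ^ b + pC q • (X 0 ^ (a+1) * X 1 ^ (b+q+1)) := by
    rw [smul_eq_C_mul]; simp only [g2]; ring
  rw [hexp, map_add, map_smul, NF_X, NF_X]
  rcases Nat.eq_zero_or_pos b with hb | hb
  · subst hb
    by_cases ha1 : a + q + 2 ≤ 2*q+1
    · rw [show (0:ℕ)+q+1 = q+1 by ring, nf_r8 q (a+q+2) (by omega) ha1,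
        nf_std_xy q (a+1) (q+1) (by omega) (by omega) (by omega),
        show a+q+2-(q+1) = a+1 by omega, smul_eq_C_mul, map_neg]
      ring
    · by_cases ha2 : a = q
      · rw [show (0:ℕ)+q+1 = q+1 by ring, show a+q+2 = 2*q+2 by omega, nf_r6 q,
          show a+1 = q+1 by omega, nf_r2 q (q+1) (by omega) (by omega)]
        rw [smul_eq_C_mul, ← mul_assoc, ← C_mul]
        have : pC q * -(pC q)⁻¹ = -1 := by rw [mul_neg, mul_inv_cancel₀ (pC_ne q)]
        rw [this, show q+1+(q+1) = 2*q+2 by ring]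
        simp
      · have h1 : nf q (a+q+2) 0 = 0 := nf_r7 q _ (by omega)
        have h2 : nf q (a+1) (q+1) = 0 := nf_r4 q _ _ (by omega) (by omega) (by omega)
        rw [show (0:ℕ)+q+1 = q+1 by ring, h1, h2]; simp
  · have h1 : nf q (a+q+2) b = 0 := by
      by_cases hb2 : b ≤ q+1
      · exact nf_r4 q _ _ (by omega) hb hb2
      · exact nf_top_y q _ _ (by omega) (by omega)
    have h2 : nf q (a+1) (b+q+1) = 0 := nf_top_y q _ _ (by omega) (by omega)
    rw [h1, h2]; simp

lemma NF_mul_g1 (q : ℕ) (u : R2) : NF q (u * g1 q) = 0 := by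
  induction u using MvPolynomial.induction_on' with
  | monomial m a =>
    have : (monomial m a) * g1 q = a • (X 0 ^ (m 0) * X 1 ^ (m 1) * g1 q) := by
      rw [← mono_eq, ← smul_mul_assoc, smul_monomial, smul_eq_mul, mul_one]
    rw [this, map_smul, NF_X_g1, smul_zero]
  | add f g hf hg => rw [add_mul, map_add, hf, hg, add_zero]

lemma NF_mul_g2 (q : ℕ) (u : R2) : NF q (u * g2 q) = 0 := by
  induction u using MvPolynomial.induction_on' with
  | monomial m a =>
    have : (monomial m a) * g2 q = a • (X 0 ^ (m 0) * X 1 ^ (m 1) * g2 q) := by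
      rw [← mono_eq, ← smul_mul_assoc, smul_monomial, smul_eq_mul, mul_one]
    rw [this, map_smul, NF_X_g2, smul_zero]
  | add f g hf hg => rw [add_mul, map_add, hf, hg, add_zero]

lemma NF_ann (q : ℕ) {h : R2} (hm : h ∈ Jd q) : NF q h = 0 := by
  obtain ⟨u, v, huv⟩ := Ideal.mem_span_pair.mp hm
  rw [← huv, map_add, NF_mul_g1, NF_mul_g2, add_zero]

def Sfin (q : ℕ) : Finset (ℕ × ℕ) :=
  ((Finset.range (q+1)) ×ˢ (Finset.range (q+2))) ∪ {(q+1, 0)}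
    ∪ ((Finset.Icc (q+2) (2*q+2)).image fun j => (0, j))

lemma mem_Sfin (q : ℕ) (m : ℕ × ℕ) :
    m ∈ Sfin q ↔ (m.1 ≤ q ∧ m.2 ≤ q+1) ∨ (m.1 = q+1 ∧ m.2 = 0)
      ∨ (m.1 = 0 ∧ q+2 ≤ m.2 ∧ m.2 ≤ 2*q+2) := by
  obtain ⟨i, j⟩ := m
  simp only [Sfin, Finset.mem_union, Finset.mem_product, Finset.mem_range,
    Finset.mem_singleton, Finset.mem_image, Finset.mem_Icc, Prod.mk.injEq, Prod.ext_iff]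
  constructor
  · rintro ((⟨h1, h2⟩ | ⟨h1, h2⟩) | ⟨a, ⟨ha1, ha2⟩, hb1, hb2⟩) <;> omega
  · rintro (⟨h1, h2⟩ | ⟨h1, h2⟩ | ⟨h1, h2, h3⟩)
    · exact Or.inl (Or.inl ⟨by omega, by omega⟩)
    · exact Or.inl (Or.inr ⟨h1, h2⟩)
    · exact Or.inr ⟨j, ⟨h2, h3⟩, h1.symm, rfl⟩

lemma card_Sfin (q : ℕ) : (Sfin q).card = (q+2)^2 := by
  rw [Sfin, Finset.card_union_of_disjoint, Finset.card_union_of_disjoint]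
  · rw [Finset.card_product, Finset.card_range, Finset.card_range, Finset.card_singleton,
      Finset.card_image_of_injective _ (fun a b h => by simpa using h), Nat.card_Icc]
    rw [show 2*q+2+1-(q+2) = q+1 by omega]
    ring
  · rw [Finset.disjoint_left]
    rintro ⟨i, j⟩ hm hmem
    simp only [Finset.mem_product, Finset.mem_range] at hm
    simp only [Finset.mem_singleton, Prod.ext_iff] at hmem
    omega
  · rw [Finset.disjoint_left]
    rintro ⟨i, j⟩ hm hmem
    simp only [Finset.mem_union, Finset.mem_product, Finset.mem_range, Finset.mem_singleton,
      Prod.ext_iff] at hm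
    simp only [Finset.mem_image, Finset.mem_Icc, Prod.ext_iff] at hmem
    obtain ⟨a, ⟨ha1, ha2⟩, hb1, hb2⟩ := hmem
    omega

def stdSet (q : ℕ) : Set R2 := (fun m : ℕ × ℕ => X 0 ^ m.1 * X 1 ^ m.2) '' ↑(Sfin q)

lemma nf_mem_span (q i j : ℕ) : nf q i j ∈ Submodule.span ℂ (stdSet q) := by
  have base : ∀ a b : ℕ, (a, b) ∈ Sfin q →
      (X 0 ^ a * X 1 ^ b : R2) ∈ Submodule.span ℂ (stdSet q) := fun a b hab =>
    Submodule.subset_span ⟨(a, b), hab, rfl⟩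
  by_cases hj2 : q + 2 ≤ j
  · by_cases hi : i = 0
    · subst hi
      by_cases hj3 : j ≤ 2*q+2
      · rw [nf_std_y q j hj2 hj3]
        simpa using base 0 j (by rw [mem_Sfin]; omega)
      · rw [nf_y_big q j (by omega)]; exact Submodule.zero_mem _
    · rw [nf_top_y q i j (by omega) hj2]; exact Submodule.zero_mem _
  · by_cases hj0 : j = 0
    · subst hj0
      by_cases h1 : i ≤ q+1
      · rw [nf_std_x q i h1]
        simpa using base i 0 (by rw [mem_Sfin]; omega)
      · by_cases h2 : i ≤ 2*q+1
        · rw [nf_r8 q i (by omega) h2, ← smul_eq_C_mul]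
          exact Submodule.smul_mem _ _ (base (i-(q+1)) (q+1) (by rw [mem_Sfin]; omega))
        · by_cases h3 : i = 2*q+2
          · subst h3
            rw [nf_r6 q]
            simpa using base 0 (2*q+2) (by rw [mem_Sfin]; omega)
          · rw [nf_r7 q i (by omega)]; exact Submodule.zero_mem _
    · by_cases h1 : i ≤ q
      · rw [nf_std_xy q i j h1 (by omega) (by omega)]
        exact base i j (by rw [mem_Sfin]; omega)
      · by_cases h2 : i = q+1
        · subst h2
          rw [nf_r2 q j (by omega) (by omega), ← smul_eq_C_mul]
          exact Submodule.smul_mem _ _ (by simpa using base 0 (q+1+j) (by rw [mem_Sfin]; omega))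
        · rw [nf_r4 q i j (by omega) (by omega) (by omega)]; exact Submodule.zero_mem _

lemma NF_mem_span (q : ℕ) (h : R2) : NF q h ∈ Submodule.span ℂ (stdSet q) := by
  induction h using MvPolynomial.induction_on' with
  | monomial m a => rw [NF_monomial]; exact Submodule.smul_mem _ _ (nf_mem_span q _ _)
  | add f g hf hg => rw [map_add]; exact Submodule.add_mem _ hf hg

lemma nf_std (q i j : ℕ) (h : (i, j) ∈ Sfin q) : nf q i j = X 0 ^ i * X 1 ^ j := by
  rw [mem_Sfin] at h
  rcases h with ⟨h1, h2⟩ | ⟨h1, h2⟩ | ⟨h1, h2, h3⟩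
  · rcases Nat.eq_zero_or_pos j with hj | hj
    · subst hj; rw [nf_std_x q i (by omega)]; ring
    · exact nf_std_xy q i j h1 hj h2
  · subst h1; subst h2; rw [nf_std_x q (q+1) le_rfl]; ring
  · subst h1; rw [nf_std_y q j h2 h3]; ring

lemma pderiv0_f (q : ℕ) :
    pderiv (0 : Fin 2) (X 0 ^ (q+2) * X 1 + X 0 * X 1 ^ (q+2) : R2) = g1 q := by
  simp only [g1, pC]
  simp [pderiv_mul, pderiv_X_self, pderiv_X_of_ne, Derivation.leibniz_pow, map_add, map_ofNat]
  ring

lemma pderiv1_f (q : ℕ) :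
    pderiv (1 : Fin 2) (X 0 ^ (q+2) * X 1 + X 0 * X 1 ^ (q+2) : R2) = g2 q := by
  simp only [g2, pC]
  simp [pderiv_mul, pderiv_X_self, pderiv_X_of_ne, Derivation.leibniz_pow, map_add, map_ofNat]
  ring

set_option maxHeartbeats 1000000 in
theorem main (q : ℕ) (f : MvPolynomial (Fin 2) ℂ)
    (hf : f = X 0 ^ (q+2) * X 1 + X 0 * X 1 ^ (q+2)) :
    Module.finrank ℂ
      (MvPolynomial (Fin 2) ℂ ⧸ Ideal.span {pderiv 0 f, pderiv 1 f}) = (q+2) ^ 2 := by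
  have h0 : pderiv (0 : Fin 2) f = g1 q := by rw [hf]; exact pderiv0_f q
  have h1 : pderiv (1 : Fin 2) f = g2 q := by rw [hf]; exact pderiv1_f q
  rw [h0, h1]
  show Module.finrank ℂ (R2 ⧸ Jd q) = (q+2)^2
  set mkq := (Ideal.Quotient.mkₐ ℂ (Jd q)).toLinearMap with hmkq
  set v : ↥(Sfin q) → (R2 ⧸ Jd q) :=
    fun m => mkq (X 0 ^ (m : ℕ × ℕ).1 * X 1 ^ (m : ℕ × ℕ).2) with hv
  -- linear independence
  have hwind : LinearIndependent ℂ (fun m : ↥(Sfin q) =>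
      (monomial (e (m : ℕ × ℕ).1 (m : ℕ × ℕ).2) (1:ℂ))) := by
    have hinj : Function.Injective (fun m : ↥(Sfin q) => e (m : ℕ × ℕ).1 (m : ℕ × ℕ).2) := by
      intro a b hab
      have h0 : (a : ℕ × ℕ).1 = (b : ℕ × ℕ).1 := by
        have := congrArg (fun s : Fin 2 →₀ ℕ => s 0) hab
        simpa [e_apply0] using this
      have h1' : (a : ℕ × ℕ).2 = (b : ℕ × ℕ).2 := by
        have := congrArg (fun s : Fin 2 →₀ ℕ => s 1) hab
        simpa [e_apply1] using this
      exact Subtype.ext (Prod.ext h0 h1')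
    have := (basisMonomials (Fin 2) ℂ).linearIndependent.comp _ hinj
    exact this
  have hind : LinearIndependent ℂ v := by
    rw [Fintype.linearIndependent_iff]
    intro c hc m
    set h : R2 := ∑ m : ↥(Sfin q), c m • (monomial (e (m : ℕ × ℕ).1 (m : ℕ × ℕ).2) (1:ℂ))
      with hh
    have hmem : h ∈ Jd q := by
      rw [← Ideal.Quotient.eq_zero_iff_mem (I := Jd q)]
      have : Ideal.Quotient.mk (Jd q) h = ∑ m : ↥(Sfin q), c m • v m := by
        rw [hh]
        rw [show ((Ideal.Quotient.mk (Jd q)) (∑ m : ↥(Sfin q),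
          c m • (monomial (e (m : ℕ × ℕ).1 (m : ℕ × ℕ).2) (1:ℂ)))) = mkq (∑ m : ↥(Sfin q),
          c m • (monomial (e (m : ℕ × ℕ).1 (m : ℕ × ℕ).2) (1:ℂ))) from rfl]
        rw [map_sum]
        refine Finset.sum_congr rfl fun m _ => ?_
        rw [map_smul, hv, mono_e]
      rw [this, hc]
    have hNF : NF q h = 0 := NF_ann q hmem
    have hNFh : NF q h = h := by
      rw [hh, map_sum]
      refine Finset.sum_congr rfl fun m hm => ?_
      rw [map_smul, mono_e, NF_X, nf_std q _ _ m.2]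
    have hzero : h = 0 := by rw [← hNFh, hNF]
    exact Fintype.linearIndependent_iff.mp hwind c (by rw [← hh]; exact hzero) m
  -- spanning
  have hspan : ⊤ ≤ Submodule.span ℂ (Set.range v) := by
    intro z _
    obtain ⟨h, rfl⟩ := Ideal.Quotient.mk_surjective z
    have heq : Ideal.Quotient.mk (Jd q) h = mkq (NF q h) := by
      rw [show ((Ideal.Quotient.mk (Jd q)) h) = mkq h from rfl]
      refine (Ideal.Quotient.eq (I := Jd q)).mpr ?_
      exact id_sub_NF_mem q h
    rw [heq]
    have h2 : mkq (NF q h) ∈ Submodule.span ℂ (⇑mkq '' stdSet q) :=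
      Submodule.apply_mem_span_image_of_mem_span mkq (NF_mem_span q h)
    refine Submodule.span_mono ?_ h2
    rintro _ ⟨_, ⟨⟨a, b⟩, hab, rfl⟩, rfl⟩
    exact ⟨⟨(a, b), hab⟩, rfl⟩
  let b : Module.Basis ↥(Sfin q) ℂ (R2 ⧸ Jd q) := Module.Basis.mk hind hspan
  rw [Module.finrank_eq_card_basis b, Fintype.card_coe, card_Sfin]

end
end MilnorAux

/-- Case (1.f) of the proof of Lemma 4.4: the polynomial `f = x^p y + x y^p`
has Milnor number `p²`. -/
theorem milnor_number_xpy_xyp (p : ℕ) (hp : 2 ≤ p)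
    (f : MvPolynomial (Fin 2) ℂ) (hf : f = X 0 ^ p * X 1 + X 0 * X 1 ^ p) :
    Module.finrank ℂ
      (MvPolynomial (Fin 2) ℂ ⧸ Ideal.span {pderiv 0 f, pderiv 1 f}) = p ^ 2 := by
  obtain ⟨q, rfl⟩ : ∃ q, p = q + 2 := ⟨p - 2, by omega⟩
  exact MilnorAux.main q f hf
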